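/- Let α, b ∈ F^× with b + α² ≠ 0, and let c, s ∈ F. Then there exist d, f ∈ F such that (b + α²)·[1,c] ⊥ [1,s] ≃ b·[1,d] ⊥ [1,f]. -/

import Mathlib

/-- The binary quadratic form `[b₁,b₂] : (x,y) ↦ b₁x² + xy + b₂y²` on `F × F`. -/
def binQF (F : Type*) [Field F] (b₁ b₂ : F) : QuadraticForm F (F × F) :=
  LinearMap.BilinMap.toQuadraticMap (LinearMap.mk₂ F
    (fun p q : F × F => b₁ * (p.1 * q.1) + p.1 * q.2 + b₂ * (p.2 * q.2))
    (fun p p' q => by simp only [Prod.fst_add, Prod.snd_add]; ring)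
    (fun a p q => by simp only [Prod.smul_fst, Prod.smul_snd, smul_eq_mul]; ring)
    (fun p q q' => by simp only [Prod.fst_add, Prod.snd_add]; ring)
    (fun a p q => by simp only [Prod.smul_fst, Prod.smul_snd, smul_eq_mul]; ring))

/-- over a field of characteristic 2, if `α, b ∈ F^×` with `b + α² ≠ 0` and
`c, s ∈ F`, then there exist `d, f ∈ F` with
`(b + α²)·[1,c] ⊥ [1,s] ≃ b·[1,d] ⊥ [1,f]`. -/
theorem stmt17 (F : Type*) [Field F] [CharP F 2] (al b : F)
    (hal : al ≠ 0) (hb : b ≠ 0) (hba : b + al ^ 2 ≠ 0) (c s : F) :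
    ∃ d f : F,
      QuadraticMap.Equivalent
        (((b + al ^ 2) • binQF F 1 c).prod (binQF F 1 s))
        ((b • binQF F 1 d).prod (binQF F 1 f)) := by
  have h2 : (2 : F) = 0 := by
    have := CharP.cast_eq_zero F 2
    exact_mod_cast this
  set t := b + al ^ 2 with ht
  refine ⟨c * b / t, s + c * al ^ 2 / t, ?_⟩
  -- the linear change of variables
  let e : ((F × F) × (F × F)) ≃ₗ[F] ((F × F) × (F × F)) :=
  { toFun := fun p => ((p.1.1, (b * p.1.2 + al * p.2.2) / t), (al * p.1.1 + p.2.1, p.2.2))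
    invFun := fun p => ((p.1.1, (t * p.1.2 + al * p.2.2) / b), (al * p.1.1 + p.2.1, p.2.2))
    map_add' := fun p q => by
      simp only [Prod.fst_add, Prod.snd_add, Prod.mk_add_mk]
      refine Prod.ext (Prod.ext rfl ?_) (Prod.ext ?_ rfl) <;> ring
    map_smul' := fun a p => by
      simp only [Prod.smul_fst, Prod.smul_snd, smul_eq_mul, Prod.smul_mk, RingHom.id_apply]
      refine Prod.ext (Prod.ext rfl ?_) (Prod.ext ?_ rfl) <;> ring
    left_inv := fun p => by
      refine Prod.ext (Prod.ext rfl ?_) (Prod.ext ?_ rfl)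
      · field_simp
        linear_combination al * p.2.2 * h2
      · linear_combination al * p.1.1 * h2
    right_inv := fun p => by
      refine Prod.ext (Prod.ext rfl ?_) (Prod.ext ?_ rfl)
      · field_simp
        linear_combination al * p.2.2 * h2
      · linear_combination al * p.1.1 * h2 }
  refine (QuadraticMap.Equivalent.symm ⟨{ toLinearEquiv := e, map_app' := fun p => ?_ }⟩)
  obtain ⟨⟨X, Y⟩, ⟨Z, W⟩⟩ := p
  show (((b + al ^ 2) • binQF F 1 c).prod (binQF F 1 s))
      ((X, (b * Y + al * W) / t), (al * X + Z, W))
    = ((b • binQF F 1 (c * b / t)).prod (binQF F 1 (s + c * al ^ 2 / t))) ((X, Y), (Z, W))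
  simp only [QuadraticMap.prod_apply, QuadraticMap.smul_apply, binQF,
    LinearMap.BilinMap.toQuadraticMap_apply, LinearMap.mk₂_apply, smul_eq_mul]
  field_simp
  linear_combination (W * X * al ^ 3 * b * 2 + X * Z * al ^ 3 * b * 2 + W * Y * al ^ 3 * b * c + X ^ 2 * al ^ 4 * b * 2 + W * X * al * b ^ 2 + X * Z * al * b ^ 2 + W * Y * al * b ^ 2 * c + X ^ 2 * al ^ 2 * b ^ 2 + W * X * al ^ 5 + X * Z * al ^ 5 + X ^ 2 * al ^ 6) * h2
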